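/- For every strict partition λ of weight n: Σ_{x ∈ X(λ)} h(λ+□(x)) = (n+1) · h(λ). Equivalently, the Plancherel up transition probabilities p∞↑(λ, λ+□(x)) = h(λ+□(x))/(h(λ)(n+1)), x ∈ X(λ), sum to 1. -/

import Mathlib

open Finset

/-- A strict partition is encoded as the finite set of its (distinct, positive) parts:
`S` is a strict partition iff `0 ∉ S`. -/
def IsStrictPartition (S : Finset ℕ) : Prop := 0 ∉ S

/-- The weight `|λ|` of a strict partition: the sum of its parts. -/
def wt (S : Finset ℕ) : ℕ := ∑ a ∈ S, a

/-- The length `ℓ(λ)` of a strict partition: its number of parts. -/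
def len (S : Finset ℕ) : ℕ := S.card

/-- The set `X(λ)` of addable contents of the strict partition `λ`:
the contents `x` of boxes that can be added to the shifted Young diagram.
A part `a ∈ S` gives the addable content `a` iff `a + 1` is not a part, and `0` is an
addable content iff `1` is not a part (i.e. `λ` is empty or its smallest part is `≥ 2`). -/
def Xset (S : Finset ℕ) : Finset ℕ :=
  (S.filter (fun x => x + 1 ∉ S)) ∪ (if 1 ∉ S then {0} else ∅)

/-- The set `Y(λ)` of removable contents of the strict partition `λ`:
`y ∈ Y(λ)` iff `y + 1` is a part and `y` is not a part. -/
def Yset (S : Finset ℕ) : Finset ℕ :=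
  (S.filter (fun p => p - 1 ∉ S)).image (fun p => p - 1)

/-- `λ + □(x)`: add to `λ` the box of content `x ∈ X(λ)`. -/
def addBox (S : Finset ℕ) (x : ℕ) : Finset ℕ :=
  if x = 0 then insert 1 S else insert (x + 1) (S.erase x)

/-- `λ − □(y)`: remove from `λ` the box of content `y ∈ Y(λ)`. -/
def removeBox (S : Finset ℕ) (y : ℕ) : Finset ℕ :=
  if y = 0 then S.erase 1 else insert y (S.erase (y + 1))

/-- `c(c+1)` as a real number. -/
def cc (t : ℕ) : ℝ := t * (t + 1)

/-- The number `h(λ)` of standard shifted tableaux (with the doubled-edge convention):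
`h(λ) = 2^{|λ|−ℓ(λ)} |λ|!/(λ_1!⋯λ_ℓ!) ∏_{i<j} (λ_i−λ_j)/(λ_i+λ_j)`. -/
noncomputable def hfun (S : Finset ℕ) : ℝ :=
  2 ^ (wt S - len S) * (Nat.factorial (wt S) : ℝ) / (∏ a ∈ S, (Nat.factorial a : ℝ)) *
    ∏ p ∈ S.offDiag.filter (fun p => p.2 < p.1), (((p.1 : ℝ) - p.2) / ((p.1 : ℝ) + p.2))

/-- The partial fraction coefficients `θ↑_x(λ)`, `x ∈ X(λ)`. -/
noncomputable def thetaUp (S : Finset ℕ) (xh : ℕ) : ℝ :=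
  if xh = 0 then (∏ y ∈ Yset S, cc y) / (∏ x ∈ (Xset S).erase 0, cc x)
  else (∏ y ∈ Yset S, (cc xh - cc y)) /
    (cc xh * ∏ x ∈ ((Xset S).erase 0).erase xh, (cc xh - cc x))

/-- The partial fraction coefficients `θ↓_y(λ)`, `y ∈ Y(λ)`. -/
noncomputable def thetaDown (S : Finset ℕ) (yh : ℕ) : ℝ :=
  (∏ x ∈ (Xset S).erase 0, (cc yh - cc x)) / (∏ y ∈ (Yset S).erase yh, (cc yh - cc y))

/-- `Z_α(n) = α(α+2)⋯(α+2n−2)`. -/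
noncomputable def Zfun (α : ℝ) (n : ℕ) : ℝ := ∏ k ∈ Finset.range n, (α + 2 * k)

/-- The multiplicative measure weight
`M_n^α(λ) = (h(λ)² 2^{ℓ−n}/n!) ⬝ ∏_{□∈λ}(c(□)(c(□)+1)+α) / Z_α(n)`. -/
noncomputable def Mw (α : ℝ) (n : ℕ) (S : Finset ℕ) : ℝ :=
  hfun S ^ 2 * 2 ^ len S / 2 ^ n / (Nat.factorial n : ℝ) *
    (∏ p ∈ S, ∏ c ∈ Finset.range p, (cc c + α)) / Zfun α n

open Polynomial

noncomputable def pp (S : Finset ℕ) : ℝ :=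
  ∏ p ∈ S.offDiag.filter (fun p => p.2 < p.1), (((p.1 : ℝ) - p.2) / ((p.1 : ℝ) + p.2))
noncomputable def ff (a b : ℕ) : ℝ :=
  if b < a then ((a : ℝ) - b) / ((a : ℝ) + b) else ((b : ℝ) - a) / ((b : ℝ) + a)
noncomputable def Rt (S : Finset ℕ) (i : ℕ) : ℝ :=
  (∏ b ∈ S, (cc i - cc (b - 1))) / ∏ j ∈ (insert 0 S).erase i, (cc i - cc j)
theorem hfun_eq (S : Finset ℕ) : hfun S =
    2 ^ (wt S - len S) * (Nat.factorial (wt S) : ℝ) /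
      (∏ a ∈ S, (Nat.factorial a : ℝ)) * pp S := rfl
theorem cc_strictMono : StrictMono cc := by
  intro t s h
  unfold cc
  have h' : (t : ℝ) < s := by exact_mod_cast h
  have ht : (0 : ℝ) ≤ t := by positivity
  nlinarith
theorem cc_sub_ne {a b : ℕ} (h : a ≠ b) : cc a - cc b ≠ 0 :=
  sub_ne_zero.mpr (fun e => h (cc_strictMono.injective e))
theorem len_le_wt (S : Finset ℕ) (hS : 0 ∉ S) : len S ≤ wt S := by
  unfold len wt
  calc S.card = ∑ _a ∈ S, 1 := by rw [Finset.sum_const, smul_eq_mul, mul_one]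
  _ ≤ ∑ a ∈ S, a := Finset.sum_le_sum (fun a ha => Nat.one_le_iff_ne_zero.mpr
      (fun e => hS (e ▸ ha)))
theorem ff_step (a b : ℕ) (ha : 1 ≤ a) (hb : 1 ≤ b) (hba : b ≠ a) (hba1 : b ≠ a + 1) :
    ff (a + 1) b = ff a b * ((cc a - cc (b - 1)) / (cc a - cc b)) := by
  have hcc : cc a - cc b ≠ 0 := cc_sub_ne (fun e => hba e.symm)
  have hc1 : ((b - 1 : ℕ) : ℝ) = (b : ℝ) - 1 := by
    rw [Nat.cast_sub hb, Nat.cast_one]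
  rcases lt_or_gt_of_ne hba with h | h
  · have h1 : b < a + 1 := h.trans (Nat.lt_succ_self a)
    rw [ff, if_pos h1, ff, if_pos h]
    unfold cc at hcc ⊢
    rw [hc1] at *
    have hR : (a : ℝ) - b ≠ 0 := by
      have : (b : ℝ) < a := by exact_mod_cast h
      intro e; linarith
    have hab : (0 : ℝ) < (a : ℝ) + b := by
      have h2 : (0 : ℝ) < (a : ℝ) := by exact_mod_cast ha
      have h3 : (0 : ℝ) < (b : ℝ) := by exact_mod_cast hb
      linarith
    push_cast
    field_simp
    ring
  · have h1 : a + 1 < b := lt_of_le_of_ne h (fun e => hba1 e.symm)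
    rw [ff, if_neg (by omega), ff, if_neg (by omega)]
    unfold cc at hcc ⊢
    rw [hc1] at *
    have hR : (b : ℝ) - a ≠ 0 := by
      have : (a : ℝ) < b := by exact_mod_cast h
      intro e; linarith
    have hab : (0 : ℝ) < (a : ℝ) + b := by
      have h2 : (0 : ℝ) < (a : ℝ) := by exact_mod_cast ha
      have h3 : (0 : ℝ) < (b : ℝ) := by exact_mod_cast hb
      linarith
    push_cast
    field_simp
    ring

theorem pp_insert (a : ℕ) (s : Finset ℕ) (ha : a ∉ s) :
    pp (insert a s) = pp s * ∏ b ∈ s, ff a b := by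
  unfold pp
  rw [Finset.offDiag_insert ha, Finset.filter_union, Finset.filter_union]
  rw [Finset.prod_union, Finset.prod_union]
  · have h1 : ({a} ×ˢ s).filter (fun p : ℕ × ℕ => p.2 < p.1)
        = {a} ×ˢ (s.filter (fun b => b < a)) := by
      ext ⟨x, y⟩
      simp only [Finset.mem_filter, Finset.mem_product, Finset.mem_singleton]
      constructor
      · rintro ⟨⟨hx, hy⟩, h⟩; subst hx; exact ⟨rfl, hy, h⟩
      · rintro ⟨hx, hy, h⟩; subst hx; exact ⟨⟨rfl, hy⟩, h⟩
    have h2 : (s ×ˢ {a}).filter (fun p : ℕ × ℕ => p.2 < p.1)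
        = (s.filter (fun b => a < b)) ×ˢ {a} := by
      ext ⟨x, y⟩
      simp only [Finset.mem_filter, Finset.mem_product, Finset.mem_singleton]
      constructor
      · rintro ⟨⟨hx, hy⟩, h⟩; subst hy; exact ⟨⟨hx, h⟩, rfl⟩
      · rintro ⟨⟨hx, h⟩, hy⟩; subst hy; exact ⟨⟨hx, rfl⟩, h⟩
    rw [h1, h2, Finset.prod_product, Finset.prod_product, Finset.prod_singleton]
    simp only [Finset.prod_singleton]
    rw [mul_assoc]
    congr 1
    rw [← Finset.prod_filter_mul_prod_filter_not s (fun b => b < a) (ff a)]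
    congr 1
    · exact Finset.prod_congr rfl (fun b hb => by
        rw [ff, if_pos (Finset.mem_filter.mp hb).2])
    · have : s.filter (fun b => ¬ b < a) = s.filter (fun b => a < b) := by
        ext b
        simp only [Finset.mem_filter]
        constructor
        · rintro ⟨hb, h⟩
          exact ⟨hb, lt_of_le_of_ne (not_lt.mp h) (fun e => ha (e ▸ hb))⟩
        · rintro ⟨hb, h⟩; exact ⟨hb, not_lt.mpr h.le⟩
      rw [this]
      exact Finset.prod_congr rfl (fun b hb => by
        rw [ff, if_neg (not_lt.mpr (Finset.mem_filter.mp hb).2.le)])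
  · apply Finset.disjoint_filter_filter
    rw [Finset.disjoint_left]
    rintro ⟨x, y⟩ hx hy
    rw [Finset.mem_offDiag] at hx
    rw [Finset.mem_product, Finset.mem_singleton] at hy
    exact ha (hy.1 ▸ hx.1)
  · rw [Finset.disjoint_union_left]
    constructor
    · apply Finset.disjoint_filter_filter
      rw [Finset.disjoint_left]
      rintro ⟨x, y⟩ hx hy
      rw [Finset.mem_offDiag] at hx
      rw [Finset.mem_product, Finset.mem_singleton] at hy
      exact ha (hy.2 ▸ hx.2.1)
    · apply Finset.disjoint_filter_filter
      rw [Finset.disjoint_left]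
      rintro ⟨x, y⟩ hx hy
      rw [Finset.mem_product, Finset.mem_singleton] at hx hy
      exact ha (hx.1 ▸ hy.1)

theorem hfun_add_part (S : Finset ℕ) (hS : 0 ∉ S) (a : ℕ) (haS : a ∈ S) (ha1 : a + 1 ∉ S) :
    hfun (insert (a + 1) (S.erase a)) = ((wt S : ℝ) + 1) * hfun S * Rt S a := by
  have ha : 1 ≤ a := Nat.one_le_iff_ne_zero.mpr (fun e => hS (e ▸ haS))
  have h1 : a + 1 ∉ S.erase a := fun h => ha1 (Finset.mem_of_mem_erase h)
  have hsum : a + ∑ b ∈ S.erase a, b = wt S := Finset.add_sum_erase S (fun b => b) haS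
  have hwt' : wt (insert (a + 1) (S.erase a)) = wt S + 1 := by
    unfold wt
    rw [Finset.sum_insert h1]
    unfold wt at hsum
    omega
  have hcard : 1 ≤ S.card := Finset.card_pos.mpr ⟨a, haS⟩
  have hlen' : len (insert (a + 1) (S.erase a)) = len S := by
    unfold len
    rw [Finset.card_insert_of_notMem h1, Finset.card_erase_of_mem haS]
    omega
  have hlw := len_le_wt S hS
  have hpow : wt (insert (a + 1) (S.erase a)) - len (insert (a + 1) (S.erase a))
      = (wt S - len S) + 1 := by
    rw [hwt', hlen']; omega
  -- factorial products
  have hfact' : (∏ b ∈ insert (a + 1) (S.erase a), (Nat.factorial b : ℝ))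
      = (Nat.factorial (a + 1) : ℝ) * ∏ b ∈ S.erase a, (Nat.factorial b : ℝ) :=
    Finset.prod_insert h1
  have hfactS : (Nat.factorial a : ℝ) * ∏ b ∈ S.erase a, (Nat.factorial b : ℝ)
      = ∏ b ∈ S, (Nat.factorial b : ℝ) :=
    Finset.mul_prod_erase S (fun b => (Nat.factorial b : ℝ)) haS
  -- pair products
  have hppS : pp S = pp (S.erase a) * ∏ b ∈ S.erase a, ff a b := by
    conv_lhs => rw [← Finset.insert_erase haS]
    exact pp_insert a (S.erase a) (Finset.notMem_erase a S)
  have hpp' : pp (insert (a + 1) (S.erase a))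
      = pp (S.erase a) * ∏ b ∈ S.erase a, ff (a + 1) b := pp_insert _ _ h1
  have hffstep : ∏ b ∈ S.erase a, ff (a + 1) b
      = (∏ b ∈ S.erase a, ff a b) *
        ((∏ b ∈ S.erase a, (cc a - cc (b - 1))) / ∏ b ∈ S.erase a, (cc a - cc b)) := by
    rw [← Finset.prod_div_distrib, ← Finset.prod_mul_distrib]
    apply Finset.prod_congr rfl
    intro b hb
    have hbS : b ∈ S := Finset.mem_of_mem_erase hb
    exact ff_step a b ha (Nat.one_le_iff_ne_zero.mpr (fun e => hS (e ▸ hbS)))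
      (Finset.ne_of_mem_erase hb) (fun e => ha1 (e ▸ hbS))
  -- Rt
  have h0e : (0 : ℕ) ∉ S.erase a := fun h => hS (Finset.mem_of_mem_erase h)
  have hRt : Rt S a = ((cc a - cc (a - 1)) * ∏ b ∈ S.erase a, (cc a - cc (b - 1))) /
      ((cc a - cc 0) * ∏ j ∈ S.erase a, (cc a - cc j)) := by
    unfold Rt
    have hset : (insert 0 S).erase a = insert 0 (S.erase a) := by
      ext x
      simp only [Finset.mem_erase, Finset.mem_insert]
      constructor
      · rintro ⟨hx, rfl | hx2⟩
        · exact Or.inl rfl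
        · exact Or.inr ⟨hx, hx2⟩
      · rintro (rfl | ⟨hx, hx2⟩)
        · exact ⟨by omega, Or.inl rfl⟩
        · exact ⟨hx, Or.inr hx2⟩
    rw [← Finset.mul_prod_erase S (fun b => cc a - cc (b - 1)) haS, hset,
      Finset.prod_insert h0e]
  have hca1 : cc a - cc (a - 1) = 2 * a := by
    unfold cc
    rw [Nat.cast_sub ha, Nat.cast_one]
    ring
  have hcc0 : cc 0 = 0 := by unfold cc; norm_num
  have hccA : cc a = (a : ℝ) * ((a : ℝ) + 1) := rfl
  -- nonzero facts
  have haR : (0 : ℝ) < (a : ℝ) := by exact_mod_cast ha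
  have hfa : (Nat.factorial a : ℝ) ≠ 0 := by positivity
  have hfe : (∏ b ∈ S.erase a, (Nat.factorial b : ℝ)) ≠ 0 :=
    Finset.prod_ne_zero_iff.mpr (fun b _ => by positivity)
  have hden : (∏ j ∈ S.erase a, (cc a - cc j)) ≠ 0 :=
    Finset.prod_ne_zero_iff.mpr (fun j hj => cc_sub_ne (Finset.ne_of_mem_erase hj).symm)
  -- assemble
  rw [hfun_eq, hfun_eq, hpp', hffstep, hppS, hRt, hca1, hcc0, sub_zero, hpow, hwt', hfact',
    ← hfactS]
  rw [pow_succ, Nat.factorial_succ (wt S), Nat.factorial_succ a]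
  push_cast
  have ha0 : (a : ℝ) ≠ 0 := ne_of_gt haR
  have ha1R : (a : ℝ) + 1 ≠ 0 := by positivity
  set T := (2 : ℝ) ^ (wt S - len S) with hT
  set W := ((wt S).factorial : ℝ) with hW
  set A := (Nat.factorial a : ℝ) with hA
  set F := ∏ b ∈ S.erase a, (Nat.factorial b : ℝ) with hF
  set Pe := pp (S.erase a) with hPe
  set Pf := ∏ b ∈ S.erase a, ff a b with hPf
  set N := ∏ b ∈ S.erase a, (cc a - cc (b - 1)) with hN
  set D := ∏ j ∈ S.erase a, (cc a - cc j) with hD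
  have hccne : cc a ≠ 0 := by rw [hccA]; positivity
  rw [hccA] at hccne ⊢
  field_simp

theorem hfun_add_one (S : Finset ℕ) (hS : 0 ∉ S) (h1 : 1 ∉ S) :
    hfun (insert 1 S) = ((wt S : ℝ) + 1) * hfun S * Rt S 0 := by
  have hwt' : wt (insert 1 S) = wt S + 1 := by
    unfold wt; rw [Finset.sum_insert h1]; omega
  have hlen' : len (insert 1 S) = len S + 1 := by
    unfold len; rw [Finset.card_insert_of_notMem h1]
  have hpow : wt (insert 1 S) - len (insert 1 S) = wt S - len S := by
    rw [hwt', hlen']; omega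
  have hfact' : (∏ b ∈ insert 1 S, (Nat.factorial b : ℝ))
      = ∏ b ∈ S, (Nat.factorial b : ℝ) := by
    rw [Finset.prod_insert h1]; norm_num
  have hpp' : pp (insert 1 S) = pp S * ∏ b ∈ S, ff 1 b := pp_insert 1 S h1
  have hRt : Rt S 0 = ∏ b ∈ S, ff 1 b := by
    unfold Rt
    rw [Finset.erase_insert hS, ← Finset.prod_div_distrib]
    apply Finset.prod_congr rfl
    intro b hb
    have hb2 : 2 ≤ b := by
      rcases Nat.lt_or_ge b 2 with h | h
      · interval_cases b
        · exact absurd hb hS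
        · exact absurd hb h1
      · exact h
    have hbR : (2 : ℝ) ≤ (b : ℝ) := by exact_mod_cast hb2
    rw [ff, if_neg (by omega)]
    unfold cc
    rw [Nat.cast_sub (by omega : 1 ≤ b)]
    push_cast
    have h0 : (b : ℝ) ≠ 0 := by linarith
    have h0' : (b : ℝ) + 1 ≠ 0 := by linarith
    field_simp
    ring
  rw [hfun_eq, hfun_eq, hpow, hwt', hfact', hpp', hRt, Nat.factorial_succ (wt S)]
  push_cast
  ring

theorem lagrange_sum (s : Finset ℕ) (v : ℕ → ℝ) (hv : Set.InjOn v s) (hs : s.Nonempty)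
    (P : Polynomial ℝ) (hm : P.Monic) (hd : P.natDegree = s.card - 1) :
    ∑ i ∈ s, P.eval (v i) / ∏ j ∈ s.erase i, (v i - v j) = 1 := by
  have hcard : 1 ≤ s.card := Nonempty.card_pos hs
  have hdeg : P.degree < s.card := by
    rw [degree_eq_natDegree hm.ne_zero, hd]
    exact_mod_cast Nat.sub_lt_of_pos_le Nat.one_pos hcard
  have hP := Lagrange.eq_interpolate hv hdeg
  have hco := congrArg (fun Q => Polynomial.coeff Q (s.card - 1)) hP
  simp only [Lagrange.interpolate_apply, Polynomial.finset_sum_coeff,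
    Polynomial.coeff_C_mul] at hco
  have hPc : P.coeff (s.card - 1) = 1 := by rw [← hd]; exact hm.coeff_natDegree
  rw [hPc] at hco
  rw [hco]
  apply Finset.sum_congr rfl
  intro i hi
  have hb : (Lagrange.basis s v i).natDegree = s.card - 1 := Lagrange.natDegree_basis hv hi
  have hlc : (Lagrange.basis s v i).leadingCoeff = ∏ j ∈ s.erase i, (v i - v j)⁻¹ := by
    rw [Lagrange.basis, leadingCoeff_prod]
    apply Finset.prod_congr rfl
    intro j hj
    rw [Lagrange.basisDivisor, leadingCoeff_mul, leadingCoeff_C, leadingCoeff_X_sub_C, mul_one]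
  rw [← hb, ← Polynomial.leadingCoeff, hlc, div_eq_mul_inv, Finset.prod_inv_distrib]

theorem sum_Rt (S : Finset ℕ) (hS : 0 ∉ S) : ∑ i ∈ insert 0 S, Rt S i = 1 := by
  have hcard : (insert 0 S).card = S.card + 1 := Finset.card_insert_of_notMem hS
  have := lagrange_sum (insert 0 S) cc (cc_strictMono.injective.injOn)
    ⟨0, Finset.mem_insert_self 0 S⟩
    (∏ b ∈ S, (Polynomial.X - Polynomial.C (cc (b - 1))))
    (monic_prod_of_monic _ _ (fun b _ => monic_X_sub_C _))
    (by
      rw [Polynomial.natDegree_prod_of_monic _ _ (fun b _ => monic_X_sub_C _)]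
      simp [Polynomial.natDegree_X_sub_C, hcard])
  rw [← this]
  apply Finset.sum_congr rfl
  intro i _
  unfold Rt
  congr 1
  simp [Polynomial.eval_prod]

theorem mem_Xset {S : Finset ℕ} {i : ℕ} :
    i ∈ Xset S ↔ ((i ∈ S ∧ i + 1 ∉ S) ∨ (i = 0 ∧ 1 ∉ S)) := by
  unfold Xset
  split_ifs with h <;> simp [Finset.mem_union, Finset.mem_filter, h] <;> tauto

theorem Rt_vanish (S : Finset ℕ) (hS : 0 ∉ S) (i : ℕ) (hi : i ∈ insert 0 S)
    (hni : i ∉ Xset S) : Rt S i = 0 := by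
  unfold Rt
  rw [Finset.mem_insert] at hi
  rcases hi with rfl | hi
  · have h1 : 1 ∈ S := by
      by_contra h1
      exact hni (mem_Xset.mpr (Or.inr ⟨rfl, h1⟩))
    rw [Finset.prod_eq_zero h1 (by norm_num), zero_div]
  · have h1 : i + 1 ∈ S := by
      by_contra h1
      exact hni (mem_Xset.mpr (Or.inl ⟨hi, h1⟩))
    rw [Finset.prod_eq_zero h1 (by simp), zero_div]


/-- For every strict partition `λ` of weight `n`:
`∑_{x ∈ X(λ)} h(λ+□(x)) = (n+1) ⬝ h(λ)`; equivalently, the Plancherel up transition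
probabilities sum to one. -/
theorem sum_plancherel_up (S : Finset ℕ) (hS : IsStrictPartition S)
    (n : ℕ) (hn : wt S = n) :
    ∑ x ∈ Xset S, hfun (addBox S x) = ((n : ℝ) + 1) * hfun S := by
  subst hn
  have hS0 : 0 ∉ S := hS
  have hstep : ∑ x ∈ Xset S, hfun (addBox S x)
      = ∑ x ∈ Xset S, ((wt S : ℝ) + 1) * hfun S * Rt S x := by
    apply Finset.sum_congr rfl
    intro x hx
    rcases mem_Xset.mp hx with ⟨hxS, hx1⟩ | ⟨rfl, h1⟩
    · have hx0 : x ≠ 0 := fun e => hS0 (e ▸ hxS)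
      rw [addBox, if_neg hx0]
      exact hfun_add_part S hS0 x hxS hx1
    · rw [addBox, if_pos rfl]
      exact hfun_add_one S hS0 h1
  rw [hstep, ← Finset.mul_sum]
  have hsub : Xset S ⊆ insert 0 S := by
    intro i hi
    rcases mem_Xset.mp hi with ⟨hiS, _⟩ | ⟨rfl, _⟩
    · exact Finset.mem_insert_of_mem hiS
    · exact Finset.mem_insert_self 0 S
  rw [Finset.sum_subset hsub (fun i hi hni => Rt_vanish S hS0 i hi hni), sum_Rt S hS0, mul_one]
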